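/- Let A be a finite set of at least two points in ℝ² in strictly convex position (every point of A is an extreme point of the convex hull of A), and let v₁ ≠ v₂ be two points of A. Then there exists an enumeration a₀ = v₁, a₁, …, a_{k} = v₂ of all points of A such that the closed segments [aᵢ, aᵢ₊₁] (0 ≤ i < k) are pairwise non-crossing: two distinct segments of the path intersect only in a common endpoint (consecutive segments share exactly the point aᵢ₊₁, and non-consecutive segments are disjoint). -/

import Mathlib

open Set

private lemma extreme_not_openSeg {A : Set (ℝ × ℝ)}
    (hconv : ∀ a ∈ A, a ∈ Set.extremePoints ℝ (convexHull ℝ A))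
    {x y e : ℝ × ℝ} (hx : x ∈ A) (hy : y ∈ A) (he : e ∈ A) (hex : e ≠ x) :
    e ∉ openSegment ℝ x y := fun h =>
  hex ((mem_extremePoints.mp (hconv e he)).2 x (subset_convexHull ℝ A hx) y
    (subset_convexHull ℝ A hy) h).1.symm

private lemma extreme_cross_ne {A : Set (ℝ × ℝ)}
    (hconv : ∀ a ∈ A, a ∈ Set.extremePoints ℝ (convexHull ℝ A))
    {x y z : ℝ × ℝ} (hx : x ∈ A) (hy : y ∈ A) (hz : z ∈ A)
    (hxy : x ≠ y) (hxz : x ≠ z) (hyz : y ≠ z) :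
    (y.1 - x.1) * (z.2 - x.2) ≠ (y.2 - x.2) * (z.1 - x.1) := by
  intro h
  obtain ⟨c, hc1, hc2⟩ : ∃ c : ℝ, z.1 - x.1 = c * (y.1 - x.1) ∧ z.2 - x.2 = c * (y.2 - x.2) := by
    rcases eq_or_ne y.1 x.1 with h1 | h1
    · have h2 : y.2 - x.2 ≠ 0 := by
        intro h2
        exact hxy (Prod.ext h1.symm (by linarith))
      have hz1 : z.1 - x.1 = 0 := by
        rw [h1, sub_self, zero_mul] at h
        rcases mul_eq_zero.mp h.symm with h' | h'
        · exact absurd h' h2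
        · exact h'
      refine ⟨(z.2 - x.2) / (y.2 - x.2), by rw [hz1, h1]; ring, by field_simp⟩
    · have h1' : y.1 - x.1 ≠ 0 := sub_ne_zero.mpr h1
      refine ⟨(z.1 - x.1) / (y.1 - x.1), by field_simp, ?_⟩
      field_simp
      linear_combination h
  rcases lt_trichotomy c 0 with hc | hc | hc
  · have h1c : (0:ℝ) < 1 - c := by linarith
    have hmem : x ∈ openSegment ℝ y z := by
      refine ⟨-c / (1 - c), 1 / (1 - c), div_pos (by linarith) h1c, div_pos one_pos h1c,
        by field_simp <;> ring, ?_⟩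
      apply Prod.ext
      · simp only [Prod.fst_add, Prod.smul_fst, smul_eq_mul]
        field_simp
        linear_combination hc1
      · simp only [Prod.snd_add, Prod.smul_snd, smul_eq_mul]
        field_simp
        linear_combination hc2
    exact extreme_not_openSeg hconv hy hz hx hxy hmem
  · rw [hc, zero_mul] at hc1 hc2
    exact hxz (Prod.ext (by linarith) (by linarith)).symm
  · rcases lt_trichotomy c 1 with hc' | hc' | hc'
    · have hmem : z ∈ openSegment ℝ x y := by
        refine ⟨1 - c, c, by linarith, hc, by ring, ?_⟩
        apply Prod.ext
        · simp only [Prod.fst_add, Prod.smul_fst, smul_eq_mul]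
          linear_combination -hc1
        · simp only [Prod.snd_add, Prod.smul_snd, smul_eq_mul]
          linear_combination -hc2
      exact extreme_not_openSeg hconv hx hy hz (Ne.symm hxz) hmem
    · rw [hc', one_mul] at hc1 hc2
      exact hyz (Prod.ext (by linarith) (by linarith)).symm
    · have hc0 : (0:ℝ) < c := by linarith
      have hmem : y ∈ openSegment ℝ x z := by
        refine ⟨1 - 1 / c, 1 / c, by rw [sub_pos, div_lt_one hc0]; exact hc',
          div_pos one_pos hc0, by ring, ?_⟩
        apply Prod.ext
        · simp only [Prod.fst_add, Prod.smul_fst, smul_eq_mul]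
          field_simp
          linear_combination hc1
        · simp only [Prod.snd_add, Prod.smul_snd, smul_eq_mul]
          field_simp
          linear_combination hc2
      exact extreme_not_openSeg hconv hx hz hy (Ne.symm hxy) hmem

private lemma seg_consec {A : Set (ℝ × ℝ)}
    (hconv : ∀ a ∈ A, a ∈ Set.extremePoints ℝ (convexHull ℝ A))
    {x y z : ℝ × ℝ} (hx : x ∈ A) (hy : y ∈ A) (hz : z ∈ A)
    (hxy : x ≠ y) (hxz : x ≠ z) (hyz : y ≠ z) :
    segment ℝ x y ∩ segment ℝ y z = {y} := by
  apply Set.eq_singleton_iff_unique_mem.mpr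
  refine ⟨⟨right_mem_segment ℝ x y, left_mem_segment ℝ y z⟩, ?_⟩
  rintro m ⟨⟨a, b, ha, hb, hab, hm1⟩, ⟨c, d, hc, hd, hcd, hm2⟩⟩
  by_contra hmy
  have hb' : b = 1 - a := by linarith
  subst hb'
  have hc' : c = 1 - d := by linarith
  subst hc'
  have ha0 : 0 < a := by
    rcases lt_or_eq_of_le ha with h' | h'
    · exact h'
    · exfalso; apply hmy; rw [← hm1, ← h']; simp
  have hd0 : 0 < d := by
    rcases lt_or_eq_of_le hd with h' | h'
    · exact h'
    · exfalso; apply hmy; rw [← hm2, ← h']; simp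
  have heq : a • x + (1 - a) • y = (1 - d) • y + d • z := by rw [hm1, hm2]
  have e1 : a * x.1 + (1 - a) * y.1 = (1 - d) * y.1 + d * z.1 := by
    have := congrArg Prod.fst heq
    simpa only [Prod.fst_add, Prod.smul_fst, smul_eq_mul] using this
  have e2 : a * x.2 + (1 - a) * y.2 = (1 - d) * y.2 + d * z.2 := by
    have := congrArg Prod.snd heq
    simpa only [Prod.snd_add, Prod.smul_snd, smul_eq_mul] using this
  rcases lt_trichotomy a d with h' | h' | h'
  · have hmem : z ∈ openSegment ℝ x y := by
      refine ⟨a / d, (d - a) / d, div_pos ha0 hd0, div_pos (by linarith) hd0, by field_simp; ring, ?_⟩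
      apply Prod.ext
      · simp only [Prod.fst_add, Prod.smul_fst, smul_eq_mul]
        field_simp
        linear_combination e1
      · simp only [Prod.snd_add, Prod.smul_snd, smul_eq_mul]
        field_simp
        linear_combination e2
    exact extreme_not_openSeg hconv hx hy hz (Ne.symm hxz) hmem
  · apply hxz
    subst h'
    apply Prod.ext
    · have : a * x.1 = a * z.1 := by linarith
      exact mul_left_cancel₀ (ne_of_gt ha0) this
    · have : a * x.2 = a * z.2 := by linarith
      exact mul_left_cancel₀ (ne_of_gt ha0) this
  · have hmem : x ∈ openSegment ℝ y z := by
      refine ⟨(a - d) / a, d / a, div_pos (by linarith) ha0, div_pos hd0 ha0, by field_simp; ring, ?_⟩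
      apply Prod.ext
      · simp only [Prod.fst_add, Prod.smul_fst, smul_eq_mul]
        field_simp
        linear_combination -e1
      · simp only [Prod.snd_add, Prod.smul_snd, smul_eq_mul]
        field_simp
        linear_combination -e2
    exact extreme_not_openSeg hconv hy hz hx hxy hmem

private lemma seg_disj {p q c : ℝ} {v w x y : ℝ × ℝ}
    (hv : p * v.1 + q * v.2 = c) (hw : p * w.1 + q * w.2 = c)
    (hx : p * x.1 + q * x.2 < c) (hy : p * y.1 + q * y.2 < c) :
    segment ℝ v w ∩ segment ℝ x y = ∅ := by
  rw [Set.eq_empty_iff_forall_notMem]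
  rintro m ⟨⟨a, b, ha, hb, hab, hm1⟩, ⟨a', b', ha', hb', hab', hm2⟩⟩
  have e1 : a * v.1 + b * w.1 = m.1 := by
    have := congrArg Prod.fst hm1
    simpa only [Prod.fst_add, Prod.smul_fst, smul_eq_mul] using this
  have e2 : a * v.2 + b * w.2 = m.2 := by
    have := congrArg Prod.snd hm1
    simpa only [Prod.snd_add, Prod.smul_snd, smul_eq_mul] using this
  have e3 : a' * x.1 + b' * y.1 = m.1 := by
    have := congrArg Prod.fst hm2
    simpa only [Prod.fst_add, Prod.smul_fst, smul_eq_mul] using this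
  have e4 : a' * x.2 + b' * y.2 = m.2 := by
    have := congrArg Prod.snd hm2
    simpa only [Prod.snd_add, Prod.smul_snd, smul_eq_mul] using this
  have hval1 : p * m.1 + q * m.2 = c := by
    linear_combination (-p) * e1 + (-q) * e2 + a * hv + b * hw + c * hab
  have hval2 : p * m.1 + q * m.2 = a' * (p * x.1 + q * x.2) + b' * (p * y.1 + q * y.2) := by
    linear_combination (-p) * e3 + (-q) * e4
  rcases eq_or_lt_of_le ha' with h' | h'
  · have hb1 : b' = 1 := by linarith
    rw [← h', hb1] at hval2
    simp at hval2
    linarith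
  · have t1 : a' * (p * x.1 + q * x.2) < a' * c := by
      exact mul_lt_mul_of_pos_left hx h'
    have t2 : b' * (p * y.1 + q * y.2) ≤ b' * c := by
      exact mul_le_mul_of_nonneg_left hy.le hb'
    have hsum : a' * c + b' * c = c := by linear_combination c * hab'
    linarith

private lemma convexpos_mono {A B : Set (ℝ × ℝ)} (hBA : B ⊆ A)
    (hconv : ∀ a ∈ A, a ∈ Set.extremePoints ℝ (convexHull ℝ A)) :
    ∀ a ∈ B, a ∈ Set.extremePoints ℝ (convexHull ℝ B) := by
  intro a ha
  rw [mem_extremePoints]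
  refine ⟨subset_convexHull ℝ B ha, fun x₁ h₁ x₂ h₂ hseg => ?_⟩
  exact (mem_extremePoints.mp (hconv a (hBA ha))).2 x₁ (convexHull_mono hBA h₁) x₂
    (convexHull_mono hBA h₂) hseg

private lemma exists_edge {A : Set (ℝ × ℝ)} (hfin : A.Finite) (hcard : 3 ≤ A.ncard)
    (hconv : ∀ a ∈ A, a ∈ Set.extremePoints ℝ (convexHull ℝ A))
    {v : ℝ × ℝ} (hv : v ∈ A) (u : ℝ × ℝ) :
    ∃ w ∈ A, w ≠ v ∧ w ≠ u ∧ ∃ p q c : ℝ,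
      p * v.1 + q * v.2 = c ∧ p * w.1 + q * w.2 = c ∧
      ∀ z ∈ A, z ≠ v → z ≠ w → p * z.1 + q * z.2 < c := by
  classical
  set B := A \ {v} with hBdef
  have hBsub : B ⊆ A := Set.diff_subset
  have hBfin : B.Finite := hfin.diff
  have hBcard : 2 ≤ B.ncard := by
    rw [hBdef, Set.ncard_diff_singleton_of_mem hv]; omega
  have hBne : B.Nonempty := by
    rw [← Set.ncard_pos hBfin]; omega
  have hBv : ∀ z ∈ B, z ≠ v := fun z hz => hz.2
  have hvB : v ∉ convexHull ℝ B := by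
    intro hcon
    have h1 := (convex_convexHull ℝ A).mem_extremePoints_iff_mem_diff_convexHull_diff.mp
      (hconv v hv)
    apply h1.2
    refine convexHull_min ?_ ?_ hcon
    · intro z hz
      exact subset_convexHull ℝ _ ⟨subset_convexHull ℝ A hz.1, hz.2⟩
    · exact convex_convexHull ℝ _
  obtain ⟨f, u', hfu1, hfu2⟩ := geometric_hahn_banach_closed_point (convex_convexHull ℝ B)
    (hBfin.isClosed_convexHull (𝕜 := ℝ)) hvB
  set fa := f (1, 0) with hfa
  set fb := f (0, 1) with hfb
  have hfeq : ∀ z : ℝ × ℝ, f z = fa * z.1 + fb * z.2 := by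
    intro z
    have hzeq : z = z.1 • ((1:ℝ), (0:ℝ)) + z.2 • ((0:ℝ), (1:ℝ)) := by
      apply Prod.ext <;> simp
    calc f z = f (z.1 • ((1:ℝ), (0:ℝ)) + z.2 • ((0:ℝ), (1:ℝ))) := by rw [← hzeq]
    _ = z.1 * f (1, 0) + z.2 * f (0, 1) := by
        rw [map_add, map_smul, map_smul]; simp [smul_eq_mul]
    _ = fa * z.1 + fb * z.2 := by rw [← hfa, ← hfb]; ring
  have hFlt : ∀ z ∈ B, fa * z.1 + fb * z.2 < fa * v.1 + fb * v.2 := by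
    intro z hz
    have h1 := hfu1 z (subset_convexHull ℝ B hz)
    have h2 := hfeq z
    have h3 := hfeq v
    linarith
  set r : ℝ × ℝ → ℝ := fun z =>
    ((-fb * z.1 + fa * z.2) - (-fb * v.1 + fa * v.2)) /
      ((fa * v.1 + fb * v.2) - (fa * z.1 + fb * z.2)) with hr
  have hfab : ¬(fa = 0 ∧ fb = 0) := by
    rintro ⟨h1, h2⟩
    obtain ⟨z, hz⟩ := hBne
    have := hFlt z hz
    rw [h1, h2] at this
    simp at this
  have hGr : ∀ z ∈ B, (-fb * z.1 + fa * z.2) - (-fb * v.1 + fa * v.2) =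
      r z * ((fa * v.1 + fb * v.2) - (fa * z.1 + fb * z.2)) := by
    intro z hz
    have hd : (fa * v.1 + fb * v.2) - (fa * z.1 + fb * z.2) ≠ 0 :=
      ne_of_gt (sub_pos.mpr (hFlt z hz))
    simp only [hr]
    rw [div_mul_cancel₀ _ hd]
  have hrinj : ∀ z₁ ∈ B, ∀ z₂ ∈ B, z₁ ≠ z₂ → r z₁ ≠ r z₂ := by
    intro z₁ h1 z₂ h2 hne12 hreq
    have key : ∀ z ∈ B, r z = r z₁ →
        (-fb + r z₁ * fa) * z.1 + (fa + r z₁ * fb) * z.2 =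
        (-fb + r z₁ * fa) * v.1 + (fa + r z₁ * fb) * v.2 := by
      intro z hz hrz
      have h1' := hGr z hz
      rw [hrz] at h1'
      linear_combination h1'
    have e1 := key z₁ h1 rfl
    have e2 := key z₂ h2 hreq.symm
    have hpq : ¬((-fb + r z₁ * fa) = 0 ∧ (fa + r z₁ * fb) = 0) := by
      rintro ⟨hp0, hq0⟩
      apply hfab
      have hfa0 : fa * (1 + r z₁ ^ 2) = 0 := by linear_combination r z₁ * hp0 + hq0
      have h1l : (0:ℝ) < 1 + r z₁ ^ 2 := by positivity
      have hfa0' : fa = 0 := by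
        rcases mul_eq_zero.mp hfa0 with h' | h'
        · exact h'
        · linarith
      exact ⟨hfa0', by rw [hfa0'] at hp0; linarith⟩
    have hz₁v : z₁ ≠ v := hBv z₁ h1
    have hz₂v : z₂ ≠ v := hBv z₂ h2
    apply extreme_cross_ne hconv hv (hBsub h1) (hBsub h2) (Ne.symm hz₁v) (Ne.symm hz₂v) hne12
    by_cases hp0 : (-fb + r z₁ * fa) = 0
    · have hq0 : (fa + r z₁ * fb) ≠ 0 := fun h => hpq ⟨hp0, h⟩
      rw [hp0] at e1 e2
      have a2 : z₁.2 = v.2 := by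
        have : (fa + r z₁ * fb) * z₁.2 = (fa + r z₁ * fb) * v.2 := by linarith
        exact mul_left_cancel₀ hq0 this
      have b2 : z₂.2 = v.2 := by
        have : (fa + r z₁ * fb) * z₂.2 = (fa + r z₁ * fb) * v.2 := by linarith
        exact mul_left_cancel₀ hq0 this
      rw [a2, b2]
      ring
    · have key2 : (-fb + r z₁ * fa) *
          ((z₁.1 - v.1) * (z₂.2 - v.2) - (z₁.2 - v.2) * (z₂.1 - v.1)) = 0 := by
        linear_combination (z₂.2 - v.2) * e1 - (z₁.2 - v.2) * e2
      rcases mul_eq_zero.mp key2 with h' | h'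
      · exact absurd h' hp0
      · linarith
  obtain ⟨w₁, hw₁B, hw₁max⟩ := Set.exists_max_image B r hBfin hBne
  obtain ⟨w₂, hw₂B, hw₂min⟩ := Set.exists_min_image B r hBfin hBne
  have hw12 : w₁ ≠ w₂ := by
    intro heq
    obtain ⟨z₁, hz₁, z₂, hz₂, hzz⟩ := (Set.one_lt_ncard hBfin).mp (by omega)
    apply hrinj z₁ hz₁ z₂ hz₂ hzz
    have l1 := hw₁max z₁ hz₁
    have l2 := hw₂min z₁ hz₁
    have l3 := hw₁max z₂ hz₂
    have l4 := hw₂min z₂ hz₂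
    rw [← heq] at l2 l4
    linarith
  have build : ∀ s : ℝ, ∀ w₀ ∈ B, (∀ z ∈ B, z ≠ w₀ → s * r z < s * r w₀) →
      ∃ p q c : ℝ, p * v.1 + q * v.2 = c ∧ p * w₀.1 + q * w₀.2 = c ∧
        ∀ z ∈ A, z ≠ v → z ≠ w₀ → p * z.1 + q * z.2 < c := by
    intro s w₀ hw₀ hs
    refine ⟨s * (-fb + r w₀ * fa), s * (fa + r w₀ * fb),
      s * (-fb + r w₀ * fa) * v.1 + s * (fa + r w₀ * fb) * v.2, rfl, ?_, ?_⟩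
    · have h1 := hGr w₀ hw₀
      linear_combination s * h1
    · intro z hzA hzv hzw
      have hzB : z ∈ B := ⟨hzA, hzv⟩
      have h1 := hGr z hzB
      have h3 : s * r z < s * r w₀ := hs z hzB hzw
      have h4 : 0 < (fa * v.1 + fb * v.2) - (fa * z.1 + fb * z.2) :=
        sub_pos.mpr (hFlt z hzB)
      have h5 : ((fa * v.1 + fb * v.2) - (fa * z.1 + fb * z.2)) * (s * r z - s * r w₀) < 0 :=
        mul_neg_of_pos_of_neg h4 (by linarith)
      have h6 : (s * (-fb + r w₀ * fa)) * z.1 + (s * (fa + r w₀ * fb)) * z.2 -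
          ((s * (-fb + r w₀ * fa)) * v.1 + (s * (fa + r w₀ * fb)) * v.2) =
          ((fa * v.1 + fb * v.2) - (fa * z.1 + fb * z.2)) * (s * r z - s * r w₀) := by
        linear_combination s * h1
      linarith
  by_cases hu : w₁ = u
  · obtain ⟨p, q, c, h1, h2, h3⟩ := build (-1) w₂ hw₂B (fun z hz hzw => by
      have := lt_of_le_of_ne (hw₂min z hz) (Ne.symm (hrinj z hz w₂ hw₂B hzw))
      linarith)
    exact ⟨w₂, hBsub hw₂B, hBv w₂ hw₂B, by rw [← hu]; exact Ne.symm hw12, p, q, c, h1, h2, h3⟩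
  · obtain ⟨p, q, c, h1, h2, h3⟩ := build 1 w₁ hw₁B (fun z hz hzw => by
      have := lt_of_le_of_ne (hw₁max z hz) (hrinj z hz w₁ hw₁B hzw)
      linarith)
    exact ⟨w₁, hBsub hw₁B, hBv w₁ hw₁B, hu, p, q, c, h1, h2, h3⟩

private lemma main_ind : ∀ n : ℕ, ∀ A : Set (ℝ × ℝ), A.Finite → A.ncard = n + 2 →
    (∀ a ∈ A, a ∈ Set.extremePoints ℝ (convexHull ℝ A)) →
    ∀ v₁ v₂ : ℝ × ℝ, v₁ ∈ A → v₂ ∈ A → v₁ ≠ v₂ →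
    ∃ a : ℕ → ℝ × ℝ, a 0 = v₁ ∧ a (n + 1) = v₂ ∧ Set.InjOn a (Set.Iic (n + 1)) ∧
      a '' Set.Iic (n + 1) = A ∧
      (∀ i : ℕ, i + 1 < n + 1 →
        segment ℝ (a i) (a (i + 1)) ∩ segment ℝ (a (i + 1)) (a (i + 2)) = {a (i + 1)}) ∧
      (∀ i j : ℕ, i + 1 < j → j < n + 1 →
        segment ℝ (a i) (a (i + 1)) ∩ segment ℝ (a j) (a (j + 1)) = ∅) := by
  intro n
  induction n with
  | zero =>
    intro A hfin hA hconv v₁ v₂ hv₁ hv₂ hne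
    have hsub : ({v₁, v₂} : Set (ℝ × ℝ)) ⊆ A := by
      rintro x (rfl | rfl) <;> assumption
    have hpair : ({v₁, v₂} : Set (ℝ × ℝ)).ncard = 2 := Set.ncard_pair hne
    have hAeq : ({v₁, v₂} : Set (ℝ × ℝ)) = A :=
      Set.eq_of_subset_of_ncard_le hsub (by omega) hfin
    refine ⟨fun i => if i = 0 then v₁ else v₂, rfl, by norm_num, ?_, ?_, ?_, ?_⟩
    · intro i hi j hj hij
      simp only [Set.mem_Iic] at hi hj
      by_cases h0 : i = 0 <;> by_cases h1 : j = 0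
      · rw [h0, h1]
      · simp only [h0, h1, if_pos, if_neg, if_true] at hij
        · exact absurd hij hne
      · simp only [h0, h1, if_pos, if_neg, if_true] at hij
        · exact absurd hij.symm hne
      · omega
    · rw [← hAeq]
      ext x
      simp only [Set.mem_image, Set.mem_Iic, Set.mem_insert_iff, Set.mem_singleton_iff]
      constructor
      · rintro ⟨i, hi, rfl⟩
        by_cases h0 : i = 0 <;> simp [h0]
      · rintro (rfl | rfl)
        · exact ⟨0, by norm_num⟩
        · exact ⟨1, by norm_num⟩
    · intro i hi
      exact absurd hi (by omega)
    · intro i j hij hj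
      exact absurd hj (by omega)
  | succ n ih =>
    intro A hfin hA hconv v₁ v₂ hv₁ hv₂ hne
    obtain ⟨w, hwA, hwv₁, hwv₂, p, q, c, hpv, hpw, hplt⟩ :=
      exists_edge hfin (by omega) hconv hv₁ v₂
    set B := A \ {v₁} with hBdef
    have hBsub : B ⊆ A := Set.diff_subset
    have hBfin : B.Finite := hfin.diff
    have hBcard : B.ncard = n + 2 := by
      rw [hBdef, Set.ncard_diff_singleton_of_mem hv₁]; omega
    have hBconv := convexpos_mono hBsub hconv
    have hwB : w ∈ B := ⟨hwA, hwv₁⟩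
    have hv₂B : v₂ ∈ B := ⟨hv₂, Ne.symm hne⟩
    obtain ⟨b, hb0, hbk, hbinj, hbim, hbcons, hbdisj⟩ :=
      ih B hBfin hBcard hBconv w v₂ hwB hv₂B hwv₂
    set a : ℕ → ℝ × ℝ := fun i => if i = 0 then v₁ else b (i - 1) with ha
    have ha0 : a 0 = v₁ := by simp [ha]
    have key : ∀ t s : ℕ, t = s + 1 → a t = b s := by
      intro t s h
      subst h
      simp [ha]
    have hbmem : ∀ i, i ≤ n + 1 → b i ∈ B := by
      intro i hi
      rw [← hbim]
      exact ⟨i, hi, rfl⟩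
    have hbne₁ : ∀ i, i ≤ n + 1 → b i ≠ v₁ := fun i hi => (hbmem i hi).2
    refine ⟨a, ha0, ?_, ?_, ?_, ?_, ?_⟩
    · rw [key (n + 1 + 1) (n + 1) rfl]
      exact hbk
    · intro i hi j hj hij
      simp only [Set.mem_Iic] at hi hj
      match i, j with
      | 0, 0 => rfl
      | 0, (j+1) =>
        rw [ha0, key (j+1) j rfl] at hij
        exact absurd hij.symm (hbne₁ j (by omega))
      | (i+1), 0 =>
        rw [ha0, key (i+1) i rfl] at hij
        exact absurd hij (hbne₁ i (by omega))
      | (i+1), (j+1) =>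
        rw [key (i+1) i rfl, key (j+1) j rfl] at hij
        have := hbinj (Set.mem_Iic.mpr (by omega : i ≤ n + 1))
          (Set.mem_Iic.mpr (by omega : j ≤ n + 1)) hij
        omega
    · ext x
      constructor
      · rintro ⟨i, hi, rfl⟩
        simp only [Set.mem_Iic] at hi
        match i with
        | 0 => rw [ha0]; exact hv₁
        | (i+1) =>
          rw [key (i+1) i rfl]
          exact hBsub (hbmem i (by omega))
      · intro hx
        by_cases hxv : x = v₁
        · exact ⟨0, Set.mem_Iic.mpr (by omega), by rw [ha0, hxv]⟩
        · have hxB : x ∈ B := ⟨hx, hxv⟩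
          rw [← hbim] at hxB
          obtain ⟨i, hi, rfl⟩ := hxB
          simp only [Set.mem_Iic] at hi
          exact ⟨i + 1, Set.mem_Iic.mpr (by omega), key (i+1) i rfl⟩
    · intro i hi
      match i with
      | 0 =>
        rw [ha0, key 1 0 rfl, key 2 1 rfl, hb0]
        have hb1B : b 1 ∈ B := hbmem 1 (by omega)
        have hwb1 : w ≠ b 1 := by
          intro h
          have : (0 : ℕ) = 1 := hbinj (Set.mem_Iic.mpr (by omega))
            (Set.mem_Iic.mpr (by omega)) (by rw [hb0, h])
          omega
        exact seg_consec hconv hv₁ hwA (hBsub hb1B) (Ne.symm hwv₁)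
          (Ne.symm (hbne₁ 1 (by omega))) hwb1
      | (m+1) =>
        rw [key (m+1) m rfl, key (m+1+1) (m+1) rfl, key (m+1+2) (m+2) (by omega)]
        exact hbcons m (by omega)
    · intro i j hij hj
      match i with
      | 0 =>
        rw [ha0, key 1 0 rfl, hb0, key j (j-1) (by omega), key (j+1) j rfl]
        have hj1B : b (j-1) ∈ B := hbmem (j-1) (by omega)
        have hj2B : b j ∈ B := hbmem j (by omega)
        have hj1w : b (j-1) ≠ w := by
          intro h
          have : j - 1 = 0 := hbinj (Set.mem_Iic.mpr (by omega))
            (Set.mem_Iic.mpr (by omega)) (by rw [h, hb0])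
          omega
        have hj2w : b j ≠ w := by
          intro h
          have : j = 0 := hbinj (Set.mem_Iic.mpr (by omega))
            (Set.mem_Iic.mpr (by omega)) (by rw [h, hb0])
          omega
        exact seg_disj hpv hpw
          (hplt _ (hBsub hj1B) (hbne₁ (j-1) (by omega)) hj1w)
          (hplt _ (hBsub hj2B) (hbne₁ j (by omega)) hj2w)
      | (m+1) =>
        rw [key (m+1) m rfl, key (m+1+1) (m+1) rfl, key j (j-1) (by omega), key (j+1) j rfl]
        have := hbdisj m (j-1) (by omega) (by omega)
        rw [show j - 1 + 1 = j from by omega] at this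
        exact this

/-- **Non-crossing Hamiltonian paths on points in convex position.**
Let `A` be a finite set of at least two points of the plane in strictly convex position
(every point of `A` is an extreme point of its convex hull), and let `v₁ ≠ v₂` be two
points of `A`.  Then the points of `A` can be enumerated as `a 0 = v₁, a 1, …, a k = v₂`
so that the closed segments joining consecutive points are pairwise non-crossing:
consecutive segments meet exactly in their shared endpoint and non-consecutive segments
are disjoint. -/
theorem noncrossing_path_convex_position (A : Set (ℝ × ℝ)) (hfin : A.Finite)
    (hcard : 2 ≤ A.ncard)
    (hconv : ∀ a ∈ A, a ∈ Set.extremePoints ℝ (convexHull ℝ A))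
    (v₁ v₂ : ℝ × ℝ) (hv₁ : v₁ ∈ A) (hv₂ : v₂ ∈ A) (hne : v₁ ≠ v₂) :
    ∃ (k : ℕ) (a : ℕ → ℝ × ℝ),
      k + 1 = A.ncard ∧ a 0 = v₁ ∧ a k = v₂ ∧
      Set.InjOn a (Set.Iic k) ∧ a '' Set.Iic k = A ∧
      (∀ i : ℕ, i + 1 < k →
        segment ℝ (a i) (a (i + 1)) ∩ segment ℝ (a (i + 1)) (a (i + 2)) = {a (i + 1)}) ∧
      (∀ i j : ℕ, i + 1 < j → j < k →
        segment ℝ (a i) (a (i + 1)) ∩ segment ℝ (a j) (a (j + 1)) = ∅) := by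
  obtain ⟨a, h0, hk, hinj, him, hcons, hdisj⟩ :=
    main_ind (A.ncard - 2) A hfin (by omega) hconv v₁ v₂ hv₁ hv₂ hne
  exact ⟨A.ncard - 2 + 1, a, by omega, h0, hk, hinj, him, hcons, hdisj⟩
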